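/- Let (ξ_i)_{i∈Q} be independent Bernoulli indicator random variables over a finite set Q, let (Q(α))_{α∈J} be a finite family of subsets of Q, set X_α = Π_{i∈Q(α)} ξ_i and X = Σ_{α∈J} X_α. Define X₀ as the maximum m such that there exist α₁,…,α_m ∈ J with X_{α_j} = 1 for all j and Q(α_j) pairwise disjoint. Then for every natural number k ≥ 1, P(X₀ ≥ k) ≤ E[X]^k / k!. -/

import Mathlib

open MeasureTheory ProbabilityTheory Finset

lemma esymm_le_pow_div_factorial {γ : Type*} [DecidableEq γ] (s : Finset γ) (q : γ → ℝ)
    (hq : ∀ α, 0 ≤ q α) (k : ℕ) :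
    (k.factorial : ℝ) * ∑ T ∈ s.powersetCard k, ∏ α ∈ T, q α ≤ (∑ α ∈ s, q α) ^ k := by
  classical
  rw [Finset.sum_pow_eq_sum_piAntidiag, Finset.mul_sum]
  set c : Finset γ → γ → ℕ := fun T i => if i ∈ T then 1 else 0 with hc
  have hterm : ∀ T ∈ s.powersetCard k,
      (k.factorial : ℝ) * ∏ α ∈ T, q α
        = (Nat.multinomial s (c T) : ℝ) * ∏ i ∈ s, q i ^ c T i := by
    intro T hT
    rw [Finset.mem_powersetCard] at hT
    have hsum : ∑ i ∈ s, c T i = k := by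
      rw [hc]
      simp only [Finset.sum_ite_mem, Finset.inter_eq_right.mpr hT.1]
      simp [hT.2]
    have hmult : Nat.multinomial s (c T) = k.factorial := by
      have := Nat.multinomial_spec s (c T)
      have hprod : ∏ i ∈ s, (c T i).factorial = 1 := by
        apply Finset.prod_eq_one
        intro i _
        by_cases h : i ∈ T <;> simp [hc, h]
      rw [hprod, one_mul, hsum] at this
      exact this.symm ▸ rfl
    have hpow : ∏ i ∈ s, q i ^ c T i = ∏ α ∈ T, q α := by
      have : ∏ i ∈ s, q i ^ c T i = ∏ i ∈ s, (if i ∈ T then q i else 1) := by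
        apply Finset.prod_congr rfl
        intro i _
        by_cases h : i ∈ T <;> simp [hc, h]
      rw [this, ← Finset.prod_filter, Finset.filter_mem_eq_inter,
        Finset.inter_eq_right.mpr hT.1]
    rw [hmult, hpow]
  rw [Finset.sum_congr rfl hterm]
  have hinj : ∀ T ∈ s.powersetCard k, ∀ T' ∈ s.powersetCard k, c T = c T' → T = T' := by
    intro T hT T' hT' h
    ext i
    have h2 : (if i ∈ T then 1 else 0 : ℕ) = if i ∈ T' then 1 else 0 := congrFun h i
    by_cases h1 : i ∈ T <;> by_cases h3 : i ∈ T' <;> simp [h1, h3] at h2 ⊢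
  calc ∑ T ∈ s.powersetCard k, (Nat.multinomial s (c T) : ℝ) * ∏ i ∈ s, q i ^ c T i
      = ∑ d ∈ (s.powersetCard k).image c,
          (Nat.multinomial s d : ℝ) * ∏ i ∈ s, q i ^ d i :=
        (Finset.sum_image (f := fun d => (Nat.multinomial s d : ℝ) * ∏ i ∈ s, q i ^ d i)
          hinj).symm
    _ ≤ _ := ?_
  apply Finset.sum_le_sum_of_subset_of_nonneg
  · intro d hd
    rw [Finset.mem_image] at hd
    obtain ⟨T, hT, rfl⟩ := hd
    rw [Finset.mem_powersetCard] at hT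
    rw [Finset.mem_piAntidiag]
    constructor
    · rw [hc]
      simp only [Finset.sum_ite_mem, Finset.inter_eq_right.mpr hT.1]
      simp [hT.2]
    · intro i hi
      by_cases h : i ∈ T
      · exact hT.1 h
      · simp [hc, h] at hi
  · intro d _ _
    exact mul_nonneg (Nat.cast_nonneg _)
      (Finset.prod_nonneg fun i _ => pow_nonneg (hq i) _)

theorem stmt_10 {Ω ι γ : Type*} [MeasurableSpace Ω] [Fintype ι] [DecidableEq ι]
    (μ : Measure Ω) [IsProbabilityMeasure μ]
    (ξ : ι → Ω → ℝ) (hmeas : ∀ i, Measurable (ξ i))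
    (h01 : ∀ i ω, ξ i ω = 0 ∨ ξ i ω = 1)
    (hind : iIndepFun ξ μ)
    (Q : γ → Finset ι) (J : Finset γ) (k : ℕ) (hk : 1 ≤ k) :
    (μ {ω | ∃ T : Finset γ, T ⊆ J ∧ T.card = k ∧
        (∀ α ∈ T, ∀ i ∈ Q α, ξ i ω = 1) ∧
        (T : Set γ).Pairwise (fun α β => Disjoint (Q α) (Q β))}).toReal ≤
      (∫ ω, ∑ α ∈ J, ∏ i ∈ Q α, ξ i ω ∂μ) ^ k / (Nat.factorial k) := by
  classical
  set p : ι → ℝ := fun i => (μ (ξ i ⁻¹' {1})).toReal with hp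
  set A : Finset ι → Set Ω := fun S => ⋂ i ∈ S, ξ i ⁻¹' {1} with hAdef
  have hA : ∀ S : Finset ι, MeasurableSet (A S) := fun S =>
    MeasurableSet.biInter S.countable_toSet fun i _ => (hmeas i) (measurableSet_singleton 1)
  have hmeasInter : ∀ S : Finset ι, μ (A S) = ∏ i ∈ S, μ (ξ i ⁻¹' {1}) := fun S =>
    hind.meas_biInter fun i _ => ⟨{1}, measurableSet_singleton 1, rfl⟩
  have hprod_eq : ∀ (S : Finset ι) (ω : Ω),
      ∏ i ∈ S, ξ i ω = Set.indicator (A S) 1 ω := by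
    intro S ω
    by_cases h : ω ∈ A S
    · rw [Set.indicator_of_mem h]
      simp only [hAdef, Set.mem_iInter, Set.mem_preimage, Set.mem_singleton_iff] at h
      rw [Finset.prod_eq_one fun i hi => h i hi]; rfl
    · rw [Set.indicator_of_notMem h]
      simp only [hAdef, Set.mem_iInter, Set.mem_preimage, Set.mem_singleton_iff,
        not_forall] at h
      obtain ⟨i, hi, hne⟩ := h
      exact Finset.prod_eq_zero hi ((h01 i ω).resolve_right hne)
  have hint : ∀ S : Finset ι, ∫ ω, ∏ i ∈ S, ξ i ω ∂μ = ∏ i ∈ S, p i := by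
    intro S
    rw [show (fun ω => ∏ i ∈ S, ξ i ω) = Set.indicator (A S) 1 from funext (hprod_eq S)]
    rw [integral_indicator_one (hA S), Measure.real, hmeasInter S, ENNReal.toReal_prod]
  have hinteg : ∀ S : Finset ι, Integrable (fun ω => ∏ i ∈ S, ξ i ω) μ := by
    intro S
    rw [show (fun ω => ∏ i ∈ S, ξ i ω) = Set.indicator (A S) 1 from funext (hprod_eq S)]
    exact (integrable_const (1 : ℝ)).indicator (hA S)
  set q : γ → ℝ := fun α => ∏ i ∈ Q α, p i with hqdef
  have hp0 : ∀ i, 0 ≤ p i := fun i => ENNReal.toReal_nonneg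
  have hq0 : ∀ α, 0 ≤ q α := fun α => Finset.prod_nonneg fun i _ => hp0 i
  have hRHS : ∫ ω, ∑ α ∈ J, ∏ i ∈ Q α, ξ i ω ∂μ = ∑ α ∈ J, q α := by
    rw [integral_finset_sum J fun α _ => hinteg (Q α)]
    exact Finset.sum_congr rfl fun α _ => hint (Q α)
  set D := (J.powersetCard k).filter
      (fun T : Finset γ => (T : Set γ).Pairwise (fun α β => Disjoint (Q α) (Q β))) with hD
  have hsub : {ω | ∃ T : Finset γ, T ⊆ J ∧ T.card = k ∧
        (∀ α ∈ T, ∀ i ∈ Q α, ξ i ω = 1) ∧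
        (T : Set γ).Pairwise (fun α β => Disjoint (Q α) (Q β))}
      ⊆ ⋃ T ∈ D, A (Finset.biUnion T Q) := by
    intro ω hω
    obtain ⟨T, hTJ, hTcard, hTall, hTpair⟩ := hω
    have hTD : T ∈ D := by
      rw [hD, Finset.mem_filter, Finset.mem_powersetCard]
      exact ⟨⟨hTJ, hTcard⟩, hTpair⟩
    refine Set.mem_iUnion.mpr ⟨T, Set.mem_iUnion.mpr ⟨hTD, ?_⟩⟩
    · simp only [hAdef, Set.mem_iInter, Set.mem_preimage, Set.mem_singleton_iff]
      intro i hi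
      obtain ⟨α, hα, hiα⟩ := Finset.mem_biUnion.mp hi
      exact hTall α hα i hiα
  have h1 : μ {ω | ∃ T : Finset γ, T ⊆ J ∧ T.card = k ∧
        (∀ α ∈ T, ∀ i ∈ Q α, ξ i ω = 1) ∧
        (T : Set γ).Pairwise (fun α β => Disjoint (Q α) (Q β))}
      ≤ ∑ T ∈ D, μ (A (Finset.biUnion T Q)) :=
    (measure_mono hsub).trans (measure_biUnion_finset_le D _)
  have h2 : (μ {ω | ∃ T : Finset γ, T ⊆ J ∧ T.card = k ∧
        (∀ α ∈ T, ∀ i ∈ Q α, ξ i ω = 1) ∧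
        (T : Set γ).Pairwise (fun α β => Disjoint (Q α) (Q β))}).toReal
      ≤ ∑ T ∈ D, (μ (A (Finset.biUnion T Q))).toReal := by
    rw [← ENNReal.toReal_sum fun T _ => measure_ne_top μ _]
    exact ENNReal.toReal_mono
      (ENNReal.sum_ne_top.mpr fun T _ => measure_ne_top μ _) h1
  have h3 : ∀ T ∈ D, (μ (A (Finset.biUnion T Q))).toReal = ∏ α ∈ T, q α := by
    intro T hT
    rw [hD, Finset.mem_filter] at hT
    rw [hmeasInter, ENNReal.toReal_prod]
    exact Finset.prod_biUnion fun α hα β hβ hne => hT.2 hα hβ hne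
  calc (μ {ω | ∃ T : Finset γ, T ⊆ J ∧ T.card = k ∧
        (∀ α ∈ T, ∀ i ∈ Q α, ξ i ω = 1) ∧
        (T : Set γ).Pairwise (fun α β => Disjoint (Q α) (Q β))}).toReal
      ≤ ∑ T ∈ D, ∏ α ∈ T, q α := by
        rw [← Finset.sum_congr rfl h3]; exact h2
    _ ≤ ∑ T ∈ J.powersetCard k, ∏ α ∈ T, q α := by
        apply Finset.sum_le_sum_of_subset_of_nonneg (Finset.filter_subset _ _)
        intro T _ _
        exact Finset.prod_nonneg fun α _ => hq0 α
    _ ≤ (∑ α ∈ J, q α) ^ k / k.factorial := by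
        rw [le_div_iff₀ (by positivity : (0:ℝ) < k.factorial), mul_comm]
        exact esymm_le_pow_div_factorial J q hq0 k
    _ = (∫ ω, ∑ α ∈ J, ∏ i ∈ Q α, ξ i ω ∂μ) ^ k / k.factorial := by rw [hRHS]
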